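/- Let V be a finite-dimensional real inner product space with dim V ≥ 2, and let A, B, H be symmetric endomorphisms of V such that A is not a scalar multiple of the identity. If ⟨AX,Y⟩·B + ⟨BX,Y⟩·A + ⟨X,Y⟩·H + ⟨HX,Y⟩·id = 0 (as endomorphisms of V) for all X, Y ∈ V, then there exists b ∈ ℝ such that B = b·id. -/

import Mathlib

open RealInnerProductSpace

theorem stmt0 {V : Type*} [NormedAddCommGroup V] [InnerProductSpace ℝ V]
    [FiniteDimensional ℝ V] (hdim : 2 ≤ Module.finrank ℝ V)
    (A B H : V →ₗ[ℝ] V)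
    (hA : A.IsSymmetric) (hB : B.IsSymmetric) (hH : H.IsSymmetric)
    (hAni : ∀ a : ℝ, A ≠ a • LinearMap.id)
    (h : ∀ X Y : V, ⟪A X, Y⟫ • B + ⟪B X, Y⟫ • A + ⟪X, Y⟫ • H
        + ⟪H X, Y⟫ • (LinearMap.id : V →ₗ[ℝ] V) = 0) :
    ∃ b : ℝ, B = b • LinearMap.id := by
  -- independence of A and id (only the A-coefficient is needed)
  have indep : ∀ c d : ℝ, c • A + d • (LinearMap.id : V →ₗ[ℝ] V) = 0 → c = 0 := by
    intro c d hcd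
    by_contra hc
    apply hAni (-d / c)
    have h1 : c • A = (-d) • (LinearMap.id : V →ₗ[ℝ] V) := by
      linear_combination (norm := module) hcd
    have h2 : A = c⁻¹ • (c • A) := by
      rw [smul_smul, inv_mul_cancel₀ hc, one_smul]
    rw [h2, h1, smul_smul]
    congr 1
    field_simp
  -- spectral setup
  have hnn : Module.finrank ℝ V = Module.finrank ℝ V := rfl
  set b := hA.eigenvectorBasis hnn with hbdef
  set μ := hA.eigenvalues hnn with hmudef
  have hb : ∀ i, A (b i) = μ i • b i := fun i => hA.apply_eigenvectorBasis hnn i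
  have hnorm : ∀ i, ⟪b i, b i⟫ = (1 : ℝ) := by
    intro i
    rw [real_inner_self_eq_norm_sq, b.orthonormal.1 i]
    norm_num
  -- two distinct eigenvalues
  obtain ⟨i, j, hij⟩ : ∃ i j, μ i ≠ μ j := by
    by_contra hcon
    push_neg at hcon
    have hi0 : (0 : ℕ) < Module.finrank ℝ V := by omega
    let i0 : Fin (Module.finrank ℝ V) := ⟨0, hi0⟩
    apply hAni (μ i0)
    apply b.toBasis.ext
    intro k
    simp only [b.coe_toBasis, LinearMap.smul_apply, LinearMap.id_coe, id_eq]
    rw [hb k, hcon k i0]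
  have hd : μ i - μ j ≠ 0 := sub_ne_zero.mpr hij
  -- the two basic equations
  have E1 : μ i • B + ⟪B (b i), b i⟫ • A + H + ⟪H (b i), b i⟫ • (LinearMap.id : V →ₗ[ℝ] V) = 0 := by
    have h1 := h (b i) (b i)
    rw [hb i, real_inner_smul_left, hnorm i, mul_one, one_smul] at h1
    exact h1
  have E2 : μ j • B + ⟪B (b j), b j⟫ • A + H + ⟪H (b j), b j⟫ • (LinearMap.id : V →ₗ[ℝ] V) = 0 := by
    have h1 := h (b j) (b j)
    rw [hb j, real_inner_smul_left, hnorm j, mul_one, one_smul] at h1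
    exact h1
  set p : ℝ := (μ i - μ j)⁻¹ * (⟪B (b j), b j⟫ - ⟪B (b i), b i⟫) with hp
  set q : ℝ := (μ i - μ j)⁻¹ * (⟪H (b j), b j⟫ - ⟪H (b i), b i⟫) with hq
  have hB2 : B = p • A + q • (LinearMap.id : V →ₗ[ℝ] V) := by
    have E3 : (μ i - μ j) • B = (⟪B (b j), b j⟫ - ⟪B (b i), b i⟫) • A
        + (⟪H (b j), b j⟫ - ⟪H (b i), b i⟫) • (LinearMap.id : V →ₗ[ℝ] V) := by
      linear_combination (norm := module) E1 - E2
    have h4 := congrArg (fun T => (μ i - μ j)⁻¹ • T) E3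
    rw [smul_smul, inv_mul_cancel₀ hd, one_smul, smul_add, smul_smul, smul_smul] at h4
    rw [h4, hp, hq]
  set r : ℝ := -(2 * p * μ i) - q with hr
  set s : ℝ := -(μ i * q) - ⟪H (b i), b i⟫ with hs
  have hH2 : H = r • A + s • (LinearMap.id : V →ₗ[ℝ] V) := by
    rw [hB2] at E1
    simp only [LinearMap.add_apply, LinearMap.smul_apply, LinearMap.id_coe, id_eq,
      inner_add_left, real_inner_smul_left] at E1
    rw [hb i, real_inner_smul_left, hnorm i] at E1
    rw [hr, hs]
    linear_combination (norm := module) E1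
  -- the key family of relations
  have key : ∀ X Y : V, (⟪A X, Y⟫ * (2 * p) + ⟪X, Y⟫ * (q + r)) • A
      + (⟪A X, Y⟫ * (q + r) + ⟪X, Y⟫ * (2 * s)) • (LinearMap.id : V →ₗ[ℝ] V) = 0 := by
    intro X Y
    have hXY := h X Y
    rw [hB2, hH2] at hXY
    simp only [LinearMap.add_apply, LinearMap.smul_apply, LinearMap.id_coe, id_eq,
      inner_add_left, real_inner_smul_left] at hXY
    linear_combination (norm := module) hXY
  have F1 : μ i * (2 * p) + 1 * (q + r) = 0 := by
    have k1 := key (b i) (b i)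
    rw [hb i, real_inner_smul_left, hnorm i, mul_one] at k1
    exact indep _ _ k1
  have F2 : μ j * (2 * p) + 1 * (q + r) = 0 := by
    have k1 := key (b j) (b j)
    rw [hb j, real_inner_smul_left, hnorm j, mul_one] at k1
    exact indep _ _ k1
  have hp0 : p = 0 := by
    have hmul : (μ i - μ j) * (2 * p) = 0 := by linear_combination F1 - F2
    rcases mul_eq_zero.mp hmul with h1 | h1
    · exact absurd h1 hd
    · linarith
  refine ⟨q, ?_⟩
  rw [hB2, hp0, zero_smul, zero_add]
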